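/- Let B be a board (rational convex polygon), ℙ a piece with two basic moves, and q ≥ 1. Then z = (z₁, z₂, …, z_q) ∈ B^q has full rank (rank 2q) if and only if z' = (z₁, …, z_q, z_q) ∈ B^{q+1} has full rank (rank 2(q+1)). -/
import Mathlib


/-! Common definitions: boards, pieces, hyperplane arrangements, rank,
antipode maps, trajectories, augmentations, crossing points, denominators. -/

noncomputable section

/-- A point of the plane. -/
abbrev Pt : Type := ℝ × ℝ

/-- Dot product on `ℝ²`. -/
def dotp (u v : Pt) : ℝ := u.1 * v.1 + u.2 * v.2

/-- A board: a rational convex polygon `{z | ∀ j, a_j · z ≤ β_j}`, bounded, with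
nonempty interior, each defining line meeting the board in at least two points (an edge). -/
structure Board where
  s : ℕ
  A : Fin s → Pt
  β : Fin s → ℝ
  A_rat : ∀ j, ∃ p q : ℚ, A j = ((p : ℝ), (q : ℝ))
  β_rat : ∀ j, ∃ p : ℚ, β j = (p : ℝ)
  bounded : Bornology.IsBounded {z : Pt | ∀ j, dotp (A j) z ≤ β j}
  int_ne : (interior {z : Pt | ∀ j, dotp (A j) z ≤ β j}).Nonempty
  edges : ∀ j, ∃ u v : Pt, u ≠ v ∧ (∀ k, dotp (A k) u ≤ β k) ∧ (∀ k, dotp (A k) v ≤ β k) ∧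
    dotp (A j) u = β j ∧ dotp (A j) v = β j

/-- The set of points of the board. -/
def Board.set (Bd : Board) : Set Pt := {z | ∀ j, dotp (Bd.A j) z ≤ Bd.β j}

/-- The corners of the board: its extreme points. -/
def Board.corners (Bd : Board) : Set Pt := Set.extremePoints ℝ Bd.set

/-- A two-move rider: two nonparallel basic moves `(c r, d r)`, each with coprime entries. -/
structure Piece where
  c : Bool → ℤ
  d : Bool → ℤ
  coprime : ∀ r, Int.gcd (c r) (d r) = 1
  nonparallel : c false * d true - c true * d false ≠ 0

/-- The basic move vector of `P` of type `r`, as a vector in `ℝ²`. -/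
def Piece.mv (P : Piece) (r : Bool) : Pt := ((P.c r : ℝ), (P.d r : ℝ))

/-- The normal vector `(d_r, -c_r)` of the attack equations of type `r`. -/
def Piece.anorm (P : Piece) (r : Bool) : Pt := ((P.d r : ℝ), -(P.c r : ℝ))

/-- A configuration of `q` points in the plane; the configuration space is `ℝ^{2q}`. -/
abbrev Conf (q : ℕ) : Type := Fin q → Pt

/-- Dot product on the configuration space `ℝ^{2q}`. -/
def confDot {q : ℕ} (u w : Conf q) : ℝ := ∑ k, dotp (u k) (w k)

/-- The vector of `ℝ^{2q}` whose `i`-th planar component is `v` and all others `0`. -/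
def unitVec {q : ℕ} (i : Fin q) (v : Pt) : Conf q := fun k => if k = i then v else 0

/-- The normal vector in `ℝ^{2q}` of the attack hyperplane `(w_i - w_j) · v = 0`. -/
def attackNormal {q : ℕ} (i j : Fin q) (v : Pt) : Conf q :=
  fun k => if k = i then v else if k = j then -v else 0

/-- The hyperplane arrangement `H(z)` associated to a configuration `z`: each hyperplane
`{w | n · w = β}` is recorded as the pair `(n, β)`.  It consists of the attack hyperplanes
through `z` and the fixation hyperplanes through `z`. -/
def HArr (Bd : Board) (P : Piece) {q : ℕ} (z : Conf q) : Set (Conf q × ℝ) :=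
  {h | (∃ i j : Fin q, ∃ r : Bool, i < j ∧ dotp (z i - z j) (P.anorm r) = 0 ∧
          h = (attackNormal i j (P.anorm r), 0)) ∨
       (∃ i : Fin q, ∃ e : Fin Bd.s, dotp (Bd.A e) (z i) = Bd.β e ∧
          h = (unitVec i (Bd.A e), Bd.β e))}

/-- The rank of a configuration `z`: the dimension of the span of the normal vectors
of the hyperplanes of `H(z)`. -/
def confRank (Bd : Board) (P : Piece) {q : ℕ} (z : Conf q) : ℕ :=
  Module.finrank ℝ (Submodule.span ℝ (Prod.fst '' HArr Bd P z))

/-- A configuration has full rank when its rank is `2q`. -/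
def FullRank (Bd : Board) (P : Piece) {q : ℕ} (z : Conf q) : Prop :=
  confRank Bd P z = 2 * q

/-- `z ∈ B^q`. -/
def InBoard (Bd : Board) {q : ℕ} (z : Conf q) : Prop := ∀ i, z i ∈ Bd.set

/-- A vertex of the inside-out polytope `(B^q, A_P^q)`: a point of `B^q` that is the unique
common point of some subset of its associated hyperplane arrangement. -/
def IsVertex (Bd : Board) (P : Piece) {q : ℕ} (z : Conf q) : Prop :=
  InBoard Bd z ∧
    ∃ H' ⊆ HArr Bd P z, {w : Conf q | ∀ h ∈ H', confDot h.1 w = h.2} = {z}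

/-- The line through `b` in direction `v` meets the interior of `R`. -/
def meetsInterior (R : Set Pt) (v : Pt) (b : Pt) : Prop := ∃ t : ℝ, b + t • v ∈ interior R

/-- `b'` is the antipode of `b` in direction `v`: if the line through `b` with direction `v`
misses the interior of `R` then `b' = b`; otherwise `b'` is the second intersection point of
the line with the boundary of `R`. -/
def AntipRel (R : Set Pt) (v : Pt) (b b' : Pt) : Prop :=
  (¬ meetsInterior R v b → b' = b) ∧
  (meetsInterior R v b → b' ∈ frontier R ∧ b' ≠ b ∧ ∃ t : ℝ, b' = b + t • v)

/-- `s` is the antipode map of `R` in direction `v`. -/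
def IsAntipodeMap (R : Set Pt) (v : Pt) (s : Pt → Pt) : Prop :=
  ∀ b ∈ frontier R, AntipRel R v b (s b)

/-- The move type used at step `i` of an alternating sequence whose step `0` uses type `st`. -/
def altMove (st : Bool) (i : ℕ) : Bool := if i % 2 = 0 then st else !st

/-- A trajectory: a finite sequence `b 0, …, b (l-1)` of distinct boundary points of `R`,
each obtained from the previous by an antipode map, the move types alternating. -/
def IsTrajectory (R : Set Pt) (mv : Bool → Pt) (l : ℕ) (b : ℕ → Pt) (st : Bool) : Prop :=
  1 ≤ l ∧ (∀ i, i < l → b i ∈ frontier R) ∧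
  (∀ i j, i < l → j < l → b i = b j → i = j) ∧
  (∀ i, i + 1 < l → AntipRel R (mv (altMove st i)) (b i) (b (i + 1)))

/-- A cyclical trajectory: additionally the first point is the antipode of the last,
the move type continuing the alternation. -/
def IsCyclical (R : Set Pt) (mv : Bool → Pt) (l : ℕ) (b : ℕ → Pt) (st : Bool) : Prop :=
  IsTrajectory R mv l b st ∧ AntipRel R (mv (altMove st (l - 1))) (b (l - 1)) (b 0)

/-- The configuration `(b 1, …, b l) ∈ B^l` formed by the points of a trajectory. -/
def trajConf (l : ℕ) (b : ℕ → Pt) : Conf l := fun i => b i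

/-- A corner trajectory: a trajectory containing a corner of the board. -/
def IsCornerTraj (Bd : Board) (P : Piece) (l : ℕ) (b : ℕ → Pt) (st : Bool) : Prop :=
  IsTrajectory Bd.set P.mv l b st ∧ ∃ i, i < l ∧ b i ∈ Bd.corners

/-- A rigid cycle: a cyclical trajectory of full rank. -/
def IsRigidCycle (Bd : Board) (P : Piece) (l : ℕ) (b : ℕ → Pt) (st : Bool) : Prop :=
  IsCyclical Bd.set P.mv l b st ∧ confRank Bd P (trajConf l b) = 2 * l

/-- The trajectory can be extended backwards (the relevant antipode of its first point
is a different point). -/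
def CanExtendBack (R : Set Pt) (mv : Bool → Pt) (b : ℕ → Pt) (st : Bool) : Prop :=
  meetsInterior R (mv (altMove st 1)) (b 0)

/-- The trajectory can be extended forwards (the relevant antipode of its last point
is a different point). -/
def CanExtendFwd (R : Set Pt) (mv : Bool → Pt) (l : ℕ) (b : ℕ → Pt) (st : Bool) : Prop :=
  meetsInterior R (mv (altMove st (l - 1))) (b (l - 1))

/-- `a 0, …, a (L-1)` is the augmentation of the trajectory `b 0, …, b (l-1)`:
the trajectory with the antipode of its first point prepended whenever it differs from the
first point, and the antipode of its last point appended whenever it differs from the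
last point. -/
def IsAugmentation (R : Set Pt) (mv : Bool → Pt) (l : ℕ) (b : ℕ → Pt) (st : Bool)
    (L : ℕ) (a : ℕ → Pt) : Prop :=
  ∃ off : ℕ,
    (∀ i, i < l → a (i + off) = b i) ∧
    (CanExtendBack R mv b st → off = 1 ∧ AntipRel R (mv (altMove st 1)) (b 0) (a 0)) ∧
    (¬ CanExtendBack R mv b st → off = 0) ∧
    (CanExtendFwd R mv l b st →
      L = l + off + 1 ∧ AntipRel R (mv (altMove st (l - 1))) (b (l - 1)) (a (l + off))) ∧
    (¬ CanExtendFwd R mv l b st → L = l + off)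

/-- `c` is a crossing point of the two sequences: an interior point of `R` lying on a
segment of each. -/
def CrossingOfSeqs (R : Set Pt) (La : ℕ) (a : ℕ → Pt) (Lb : ℕ) (bb : ℕ → Pt) (c : Pt) : Prop :=
  c ∈ interior R ∧ ∃ i j, i + 1 < La ∧ j + 1 < Lb ∧
    c ∈ segment ℝ (a i) (a (i + 1)) ∧ c ∈ segment ℝ (bb j) (bb (j + 1))

/-- `c` is a self-crossing point of the sequence: an interior point of `R` lying on two
distinct segments of the sequence. -/
def SelfCrossingOfSeq (R : Set Pt) (La : ℕ) (a : ℕ → Pt) (c : Pt) : Prop :=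
  c ∈ interior R ∧ ∃ i j, i ≠ j ∧ i + 1 < La ∧ j + 1 < La ∧
    c ∈ segment ℝ (a i) (a (i + 1)) ∧ c ∈ segment ℝ (a j) (a (j + 1))

/-- `x` is a rational number whose denominator (in lowest terms) divides `D`. -/
def DenDvd (x : ℝ) (D : ℕ) : Prop := ∃ p : ℚ, (p : ℝ) = x ∧ p.den ∣ D

/-- Both coordinates of `z` are rational with denominators dividing `D`. -/
def PtDenDvd (z : Pt) (D : ℕ) : Prop := DenDvd z.1 D ∧ DenDvd z.2 D

/-- `D` is the denominator of the inside-out polytope `(B^q, A_P^q)`: the least common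
multiple of the denominators of the coordinates of all of its vertices. -/
def IsIOPDenom (Bd : Board) (P : Piece) (q : ℕ) (D : ℕ) : Prop :=
  (∀ z : Conf q, IsVertex Bd P z → ∀ i, PtDenDvd (z i) D) ∧
  (∀ D' : ℕ, (∀ z : Conf q, IsVertex Bd P z → ∀ i, PtDenDvd (z i) D') → D ∣ D')

/-- A finite family of finite sequences of points (with starting move types),
to be used as a family of trajectories. -/
structure TrajFamily where
  m : ℕ
  len : ℕ → ℕ
  pts : ℕ → ℕ → Pt
  st : ℕ → Bool

/-- Every member of the family is a trajectory. -/
def TrajFamily.Wf (F : TrajFamily) (R : Set Pt) (mv : Bool → Pt) : Prop :=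
  ∀ k, k < F.m → IsTrajectory R mv (F.len k) (F.pts k) (F.st k)

/-- The members of the family partition the set `S`: their point sets are pairwise disjoint
with union `S`. -/
def TrajFamily.Partitions (F : TrajFamily) (S : Set Pt) : Prop :=
  {p | ∃ k, k < F.m ∧ ∃ i, i < F.len k ∧ F.pts k i = p} = S ∧
  ∀ k k', k < F.m → k' < F.m → k ≠ k' →
    ∀ i i', i < F.len k → i' < F.len k' → F.pts k i ≠ F.pts k' i'

/-- The family is a partition into maximal trajectories: no point of one member is an
antipode of a point of a different member (no edge of the antipode graph joins two
distinct members). -/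
def TrajFamily.Maximal (F : TrajFamily) (R : Set Pt) (mv : Bool → Pt) : Prop :=
  ∀ k k', k < F.m → k' < F.m → k ≠ k' →
    ∀ i i', i < F.len k → i' < F.len k' →
      ∀ r : Bool, ¬ AntipRel R (mv r) (F.pts k i) (F.pts k' i')

/-- The unit square `[0,1]²`. -/
def unitSq : Set Pt := Set.Icc ((0, 0) : Pt) ((1, 1) : Pt)

end


noncomputable section
namespace FRAux

lemma finrank_conf (m : ℕ) : Module.finrank ℝ (Conf m) = 2 * m := by
  simp [Conf, Module.finrank_pi_fintype, Module.finrank_prod, mul_comm]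

lemma fullRank_iff_top (Bd : Board) (P : Piece) {m : ℕ} (z : Conf m) :
    FullRank Bd P z ↔ Submodule.span ℝ (Prod.fst '' HArr Bd P z) = ⊤ := by
  constructor
  · intro h
    apply Submodule.eq_top_of_finrank_eq
    rw [show Module.finrank ℝ (Submodule.span ℝ (Prod.fst '' HArr Bd P z)) = confRank Bd P z
      from rfl, h, finrank_conf]
  · intro h
    unfold FullRank confRank
    rw [h, finrank_top, finrank_conf]

/-- The extension map `ℝ^{2(q+1)} → ℝ^{2(q+2)}` appending a zero component. -/
def extMap (q : ℕ) : Conf (q + 1) →ₗ[ℝ] Conf (q + 2) where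
  toFun u := Fin.snoc u 0
  map_add' u v := by
    funext k
    induction k using Fin.lastCases <;> simp
  map_smul' a u := by
    funext k
    induction k using Fin.lastCases <;> simp

/-- The merge map `ℝ^{2(q+2)} → ℝ^{2(q+1)}` adding the last component to the previous one. -/
def mergeMap (q : ℕ) : Conf (q + 2) →ₗ[ℝ] Conf (q + 1) where
  toFun w k := w k.castSucc + (if k = Fin.last q then w (Fin.last (q + 1)) else 0)
  map_add' u v := by
    funext k
    by_cases h : k = Fin.last q <;> simp [h] <;> abel
  map_smul' a u := by
    funext k
    by_cases h : k = Fin.last q <;> simp [h, smul_add]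

lemma mergeMap_surjective (q : ℕ) : Function.Surjective (mergeMap q) := by
  intro u
  refine ⟨Fin.snoc u 0, ?_⟩
  funext k
  simp [mergeMap]

lemma attack_mem (Bd : Board) (P : Piece) {m : ℕ} (z : Conf m) (i j : Fin m) (r : Bool)
    (hij : i < j) (hc : dotp (z i - z j) (P.anorm r) = 0) :
    attackNormal i j (P.anorm r) ∈ Prod.fst '' HArr Bd P z :=
  ⟨(attackNormal i j (P.anorm r), 0), Or.inl ⟨i, j, r, hij, hc, rfl⟩, rfl⟩

lemma fix_mem (Bd : Board) (P : Piece) {m : ℕ} (z : Conf m) (i : Fin m) (e : Fin Bd.s)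
    (hc : dotp (Bd.A e) (z i) = Bd.β e) :
    unitVec i (Bd.A e) ∈ Prod.fst '' HArr Bd P z :=
  ⟨(unitVec i (Bd.A e), Bd.β e), Or.inr ⟨i, e, hc, rfl⟩, rfl⟩

/-- The two attack normal vectors span the plane. -/
lemma anorm_span (P : Piece) (p : Pt) :
    ∃ a b : ℝ, a • P.anorm false + b • P.anorm true = p := by
  have hΔ : ((P.c false : ℝ) * (P.d true : ℝ) - (P.c true : ℝ) * (P.d false : ℝ)) ≠ 0 := by
    exact_mod_cast P.nonparallel
  set Δ : ℝ := (P.c false : ℝ) * (P.d true : ℝ) - (P.c true : ℝ) * (P.d false : ℝ)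
  refine ⟨(-(P.c true : ℝ) * p.1 - (P.d true : ℝ) * p.2) / Δ,
          ((P.c false : ℝ) * p.1 + (P.d false : ℝ) * p.2) / Δ, ?_⟩
  unfold Piece.anorm
  ext <;> simp [Prod.smul_def] <;> field_simp <;> ring

variable {q : ℕ}

lemma last_ne_cs (x : Fin (q + 1)) : Fin.last (q + 1) ≠ x.castSucc :=
  (Fin.castSucc_lt_last x).ne'

lemma cs_ne_last (x : Fin (q + 1)) : x.castSucc ≠ Fin.last (q + 1) :=
  (Fin.castSucc_lt_last x).ne

lemma ext_attack (i j : Fin (q + 1)) (v : Pt) :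
    extMap q (attackNormal i j v) = attackNormal i.castSucc j.castSucc v := by
  funext k
  induction k using Fin.lastCases with
  | last => simp [extMap, attackNormal, (Fin.castSucc_lt_last i).ne', (Fin.castSucc_lt_last j).ne']
  | cast k => simp [extMap, attackNormal, Fin.castSucc_inj]

lemma ext_unit (i : Fin (q + 1)) (v : Pt) :
    extMap q (unitVec i v) = unitVec i.castSucc v := by
  funext k
  induction k using Fin.lastCases with
  | last => simp [extMap, unitVec, (Fin.castSucc_lt_last i).ne']
  | cast k => simp [extMap, unitVec, Fin.castSucc_inj]

lemma merge_attack_cc (i j : Fin (q + 1)) (v : Pt) :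
    mergeMap q (attackNormal i.castSucc j.castSucc v) = attackNormal i j v := by
  funext k
  by_cases h1 : k = i <;> by_cases h2 : k = j <;>
    simp [mergeMap, attackNormal, h1, h2, Fin.castSucc_inj,
      last_ne_cs, cs_ne_last]

lemma merge_attack_last (i : Fin (q + 1)) (v : Pt) :
    mergeMap q (attackNormal i.castSucc (Fin.last (q + 1)) v) =
      (fun k => if k = i then v else 0) + (fun k => if k = Fin.last q then -v else 0) := by
  funext k
  by_cases h1 : k = i <;> by_cases h2 : k = Fin.last q <;>
    simp [mergeMap, attackNormal, h1, h2, Fin.castSucc_inj, last_ne_cs, cs_ne_last]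

lemma merge_unit_cc (i : Fin (q + 1)) (v : Pt) :
    mergeMap q (unitVec i.castSucc v) = unitVec i v := by
  funext k
  by_cases h1 : k = i <;> by_cases h2 : k = Fin.last q <;>
    simp [mergeMap, unitVec, h1, h2, Fin.castSucc_inj, last_ne_cs, cs_ne_last]

lemma merge_unit_last (v : Pt) :
    mergeMap q (unitVec (Fin.last (q + 1)) v) = unitVec (Fin.last q) v := by
  funext k
  by_cases h2 : k = Fin.last q <;>
    simp [mergeMap, unitVec, h2, last_ne_cs, cs_ne_last]

lemma snoc_cond (z : Conf (q + 1)) (r : Bool) (P : Piece) :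
    dotp ((Fin.snoc z (z (Fin.last q)) : Conf (q + 2)) (Fin.castSucc (Fin.last q)) -
      (Fin.snoc z (z (Fin.last q)) : Conf (q + 2)) (Fin.last (q + 1))) (P.anorm r) = 0 := by
  simp [Fin.snoc_castSucc, Fin.snoc_last, dotp]

lemma forward (Bd : Board) (P : Piece) (z : Conf (q + 1))
    (h : Submodule.span ℝ (Prod.fst '' HArr Bd P z) = ⊤) :
    Submodule.span ℝ (Prod.fst '' HArr Bd P (Fin.snoc z (z (Fin.last q)) : Conf (q + 2))) = ⊤ := by
  set z' : Conf (q + 2) := Fin.snoc z (z (Fin.last q)) with hz'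
  set G' := Prod.fst '' HArr Bd P z' with hG'
  -- the extension map sends generators to generators
  have hEgen : ∀ g ∈ Prod.fst '' HArr Bd P z, extMap q g ∈ G' := by
    rintro g ⟨⟨n, β⟩, hmem, rfl⟩
    rcases hmem with ⟨i, j, r, hij, hc, hfst⟩ | ⟨i, e, hc, hfst⟩
    · simp only [Prod.mk.injEq] at hfst
      rw [hfst.1, ext_attack]
      refine attack_mem Bd P z' i.castSucc j.castSucc r (by simpa using hij) ?_
      simpa [hz', Fin.snoc_castSucc] using hc
    · simp only [Prod.mk.injEq] at hfst
      rw [hfst.1, ext_unit]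
      refine fix_mem Bd P z' i.castSucc e ?_
      simpa [hz', Fin.snoc_castSucc] using hc
  have hEle : ∀ u : Conf (q + 1), extMap q u ∈ Submodule.span ℝ G' := by
    intro u
    have hu : u ∈ Submodule.span ℝ (Prod.fst '' HArr Bd P z) := h ▸ Submodule.mem_top
    have : Submodule.map (extMap q) (Submodule.span ℝ (Prod.fst '' HArr Bd P z)) ≤
        Submodule.span ℝ G' := by
      rw [Submodule.map_span]
      apply Submodule.span_mono
      rintro _ ⟨g, hg, rfl⟩
      exact hEgen g hg
    exact this ⟨u, hu, rfl⟩
  have hNN : ∀ r : Bool,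
      attackNormal (Fin.castSucc (Fin.last q)) (Fin.last (q + 1)) (P.anorm r) ∈
        Submodule.span ℝ G' :=
    fun r => Submodule.subset_span
      (attack_mem Bd P z' _ _ r (Fin.castSucc_lt_last _) (snoc_cond z r P))
  rw [Submodule.eq_top_iff']
  intro x
  obtain ⟨a, b, hab⟩ := anorm_span P (x (Fin.last (q + 1)))
  set NNf := attackNormal (Fin.castSucc (Fin.last q)) (Fin.last (q + 1)) (P.anorm false)
  set NNt := attackNormal (Fin.castSucc (Fin.last q)) (Fin.last (q + 1)) (P.anorm true)
  set y : Conf (q + 2) := x + a • NNf + b • NNt with hy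
  have hylast : y (Fin.last (q + 1)) = 0 := by
    have h1 : NNf (Fin.last (q + 1)) = -P.anorm false := by
      simp [NNf, attackNormal, last_ne_cs]
    have h2 : NNt (Fin.last (q + 1)) = -P.anorm true := by
      simp [NNt, attackNormal, last_ne_cs]
    have : y (Fin.last (q + 1)) = x (Fin.last (q + 1)) +
        a • NNf (Fin.last (q + 1)) + b • NNt (Fin.last (q + 1)) := rfl
    rw [this, h1, h2, smul_neg, smul_neg]
    rw [← hab]
    abel
  have hyE : y = extMap q (Fin.init y) := by
    funext k
    induction k using Fin.lastCases with
    | last => simp [extMap, hylast]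
    | cast k => simp [extMap, Fin.init]
  have hymem : y ∈ Submodule.span ℝ G' := hyE ▸ hEle (Fin.init y)
  have hx : x = y - a • NNf - b • NNt := by rw [hy]; abel
  rw [hx]
  exact Submodule.sub_mem _ (Submodule.sub_mem _ hymem
    (Submodule.smul_mem _ a (hNN false))) (Submodule.smul_mem _ b (hNN true))

lemma backward (Bd : Board) (P : Piece) (z : Conf (q + 1))
    (h : Submodule.span ℝ (Prod.fst '' HArr Bd P (Fin.snoc z (z (Fin.last q)) : Conf (q + 2))) = ⊤) :
    Submodule.span ℝ (Prod.fst '' HArr Bd P z) = ⊤ := by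
  set z' : Conf (q + 2) := Fin.snoc z (z (Fin.last q)) with hz'
  set G := Prod.fst '' HArr Bd P z with hG
  have hMgen : ∀ g ∈ Prod.fst '' HArr Bd P z', mergeMap q g ∈ Submodule.span ℝ G := by
    rintro g ⟨⟨n, β⟩, hmem, rfl⟩
    rcases hmem with ⟨i, j, r, hij, hc, hfst⟩ | ⟨i, e, hc, hfst⟩
    · simp only [Prod.mk.injEq] at hfst
      rw [hfst.1]
      rcases Fin.eq_castSucc_or_eq_last j with ⟨j', rfl⟩ | rfl
      · -- j = castSucc j', hence i = castSucc i'
        rcases Fin.eq_castSucc_or_eq_last i with ⟨i', rfl⟩ | rfl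
        · rw [merge_attack_cc]
          refine Submodule.subset_span (attack_mem Bd P z i' j' r
            (by simpa using hij) ?_)
          simpa [hz', Fin.snoc_castSucc] using hc
        · exact absurd (hij.trans_le (Fin.castSucc_lt_last j').le) (lt_irrefl _)
      · -- j = last
        rcases Fin.eq_castSucc_or_eq_last i with ⟨i', rfl⟩ | rfl
        · rcases eq_or_ne i' (Fin.last q) with rfl | hne
          · -- merge is zero
            have : mergeMap q (attackNormal (Fin.last q).castSucc (Fin.last (q + 1)) (P.anorm r))
                = 0 := by
              rw [merge_attack_last]
              funext k
              by_cases hk : k = Fin.last q <;> simp [hk]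
            rw [this]; exact Submodule.zero_mem _
          · have hlt : i' < Fin.last q := lt_of_le_of_ne (Fin.le_last i') hne
            have heq : mergeMap q (attackNormal i'.castSucc (Fin.last (q + 1)) (P.anorm r))
                = attackNormal i' (Fin.last q) (P.anorm r) := by
              rw [merge_attack_last]
              funext k
              by_cases h1 : k = i' <;> by_cases h2 : k = Fin.last q <;>
                simp [h1, h2, attackNormal, hne] <;> simp_all
            rw [heq]
            refine Submodule.subset_span (attack_mem Bd P z i' (Fin.last q) r hlt ?_)
            simpa [hz', Fin.snoc_castSucc, Fin.snoc_last] using hc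
        · exact absurd hij (lt_irrefl _)
    · simp only [Prod.mk.injEq] at hfst
      rw [hfst.1]
      rcases Fin.eq_castSucc_or_eq_last i with ⟨i', rfl⟩ | rfl
      · rw [merge_unit_cc]
        refine Submodule.subset_span (fix_mem Bd P z i' e ?_)
        simpa [hz', Fin.snoc_castSucc] using hc
      · rw [merge_unit_last]
        refine Submodule.subset_span (fix_mem Bd P z (Fin.last q) e ?_)
        simpa [hz', Fin.snoc_last] using hc
  have : Submodule.map (mergeMap q) (Submodule.span ℝ (Prod.fst '' HArr Bd P z')) ≤
      Submodule.span ℝ G := by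
    rw [Submodule.map_span]
    apply Submodule.span_le.2
    rintro _ ⟨g, hg, rfl⟩
    exact hMgen g hg
  rw [h, Submodule.map_top, LinearMap.range_eq_top.2 (mergeMap_surjective q)] at this
  exact top_le_iff.1 this

end FRAux
end

noncomputable section

/-- Duplicating the last point of a configuration preserves full rank. -/
theorem fullRank_iff_fullRank_snoc (Bd : Board) (P : Piece) (q : ℕ)
    (z : Conf (q + 1)) (hz : InBoard Bd z) :
    FullRank Bd P z ↔ FullRank Bd P (Fin.snoc z (z (Fin.last q))) := by
  rw [FRAux.fullRank_iff_top, FRAux.fullRank_iff_top]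
  exact ⟨FRAux.forward Bd P z, FRAux.backward Bd P z⟩

end
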